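/- Let γ be a positive integer. Then, as rational numbers, ∏_{1 ≤ i ≤ j ≤ γ} (2 + i + j)/(i + j) = (1/(γ+2)) · binom(2(γ+1), γ+1). -/

import Mathlib

lemma inner_prod (j m : ℕ) :
    ∏ i ∈ Finset.Icc 1 m, ((2 + (i : ℚ) + (j : ℚ)) / ((i : ℚ) + (j : ℚ))) =
      (((m : ℚ) + j + 1) * ((m : ℚ) + j + 2)) / (((j : ℚ) + 1) * ((j : ℚ) + 2)) := by
  induction m with
  | zero =>
    rw [Finset.Icc_eq_empty (by omega), Finset.prod_empty]
    have h1 : ((j : ℚ) + 1) ≠ 0 := by positivity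
    have h2 : ((j : ℚ) + 2) ≠ 0 := by positivity
    push_cast
    field_simp
    ring
  | succ n ih =>
    rw [Finset.prod_Icc_succ_top (by omega : 1 ≤ n + 1), ih]
    have h1 : ((j : ℚ) + 1) ≠ 0 := by positivity
    have h2 : ((j : ℚ) + 2) ≠ 0 := by positivity
    have h3 : ((n : ℚ) + j + 1) ≠ 0 := by positivity
    have h4 : ((n : ℚ) + 1 + j) ≠ 0 := by positivity
    push_cast
    field_simp
    ring

/-- The Catalan-number product identity:
`∏_{1 ≤ i ≤ j ≤ γ} (2+i+j)/(i+j) = (1/(γ+2))·C(2(γ+1), γ+1)`. -/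
theorem catalan_product_identity (γ : ℕ) (hγ : 1 ≤ γ) :
    ∏ j ∈ Finset.Icc 1 γ, ∏ i ∈ Finset.Icc 1 j,
        ((2 + (i : ℚ) + (j : ℚ)) / ((i : ℚ) + (j : ℚ))) =
      (1 / ((γ : ℚ) + 2)) * (Nat.choose (2 * (γ + 1)) (γ + 1) : ℚ) := by
  induction γ, hγ using Nat.le_induction with
  | base =>
    norm_num [inner_prod, show (2 * (1 + 1)).choose (1 + 1) = 6 from by decide]
  | succ n hn ih =>
    rw [Finset.prod_Icc_succ_top (by omega : 1 ≤ n + 1), ih, inner_prod]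
    have key : (n + 1 + 1) * Nat.centralBinom (n + 1 + 1) =
        2 * (2 * (n + 1) + 1) * Nat.centralBinom (n + 1) :=
      Nat.succ_mul_centralBinom_succ (n + 1)
    have hc1 : (Nat.choose (2 * (n + 1)) (n + 1) : ℚ) = Nat.centralBinom (n + 1) := by
      rw [Nat.centralBinom]
    have hc2 : (Nat.choose (2 * (n + 1 + 1)) (n + 1 + 1) : ℚ) = Nat.centralBinom (n + 1 + 1) := by
      rw [Nat.centralBinom]
    rw [hc1, hc2]
    have keyQ := congrArg (Nat.cast (R := ℚ)) key
    push_cast at keyQ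
    have h1 : ((n : ℚ) + 2) ≠ 0 := by positivity
    have h2 : ((n : ℚ) + 3) ≠ 0 := by positivity
    have h3 : ((n : ℚ) + 1 + 1) ≠ 0 := by positivity
    have h4 : ((n : ℚ) + 1 + 2) ≠ 0 := by positivity
    push_cast
    field_simp
    linear_combination (-((n : ℚ) + 2)) * keyQ
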